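/- Let α ≥ 1 and h > 0, and let (x_k)_{k≥0} be a sequence in H satisfying, for every k ≥ 1, the implicit recursion k(x_{k+1} − 2x_k + x_{k−1}) + α(x_{k+1} − x_k) + β_k·h·k·(∇f(x_{k+1}) − ∇f(x_k)) + b_k·h²·k·∇f(x_{k+1}) = 0 (the (IPAHD) algorithm). Set δ_k := h·(b_k·h·k − β_{k+1} − k(β_{k+1} − β_k))·(k+1), and suppose the growth conditions (G2dis): b_k·h·k − β_{k+1} − k(β_{k+1} − β_k) > 0 for all k, and (G3dis): δ_{k+1} − δ_k ≤ (α−1)·δ_k/(k+1) for all k. Then δ_k > 0 and there exists a constant C > 0 such that f(x_k) − min_H f ≤ C/δ_k for all k ≥ 1. -/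

import Mathlib

open Real Set RealInnerProductSpace

/-- Convexity inequality via the gradient. -/
lemma grad_convex_ineq {H : Type*} [NormedAddCommGroup H] [InnerProductSpace ℝ H]
    [CompleteSpace H]
    (f : H → ℝ) (hconv : ConvexOn ℝ Set.univ f) (hdiff : Differentiable ℝ f)
    (p q : H) : f p + ⟪gradient f p, q - p⟫ ≤ f q := by
  set g : ℝ → ℝ := fun t => f (p + t • (q - p)) with hg
  have hgc : ConvexOn ℝ Set.univ g := by
    have := hconv.comp_affineMap (AffineMap.lineMap p q : ℝ →ᵃ[ℝ] H)
    simp only [Set.preimage_univ] at this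
    suffices hgeq : g = f ∘ (AffineMap.lineMap p q : ℝ →ᵃ[ℝ] H) by rw [hgeq]; exact this
    ext t
    simp only [hg, Function.comp_apply, AffineMap.lineMap_apply_module]
    congr 1
    module
  have hF : HasFDerivAt f (InnerProductSpace.toDual ℝ H (gradient f p)) p :=
    hasGradientAt_iff_hasFDerivAt.mp (hdiff p).hasGradientAt
  have hc : HasDerivAt (fun s : ℝ => p + s • (q - p)) (q - p) 0 := by
    simpa using ((hasDerivAt_id (0:ℝ)).smul_const (q - p)).const_add p
  have hg0 : HasDerivAt g ⟪gradient f p, q - p⟫ 0 := by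
    have h0 : p + (0:ℝ) • (q - p) = p := by simp
    have := (h0 ▸ hF).comp_hasDerivAt 0 hc
    rw [zero_smul, add_zero] at this
    exact this
  have := hgc.le_slope_of_hasDerivAt (Set.mem_univ (0:ℝ)) (Set.mem_univ (1:ℝ)) one_pos hg0
  rw [slope_def_field] at this
  simp [hg, -inner_gradient_left] at this
  linarith

/-- Theorem 3.1 (i): convergence rate of the values for (IPAHD). -/
theorem ipahd_value_convergence_rate
    {H : Type*} [NormedAddCommGroup H] [InnerProductSpace ℝ H] [CompleteSpace H]
    (f : H → ℝ) (hconv : ConvexOn ℝ Set.univ f) (hdiff : Differentiable ℝ f)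
    (xstar : H) (hmin : ∀ y, f xstar ≤ f y)
    (α h : ℝ) (hα : 1 ≤ α) (hh : 0 < h)
    (β b : ℕ → ℝ) (hβnn : ∀ k, 0 ≤ β k) (hbnn : ∀ k, 0 ≤ b k)
    (x : ℕ → H)
    (hrec : ∀ k : ℕ, 1 ≤ k →
      (k : ℝ) • (x (k + 1) - (2 : ℝ) • x k + x (k - 1)) + α • (x (k + 1) - x k)
        + (β k * h * k) • (gradient f (x (k + 1)) - gradient f (x k))
        + (b k * h ^ 2 * k) • gradient f (x (k + 1)) = 0)
    (δ : ℕ → ℝ)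
    (hδ : ∀ k : ℕ, δ k = h * (b k * h * k - β (k + 1) - k * (β (k + 1) - β k)) * (k + 1))
    (hG2 : ∀ k : ℕ, 1 ≤ k → 0 < b k * h * k - β (k + 1) - (k : ℝ) * (β (k + 1) - β k))
    (hG3 : ∀ k ≥ 1, δ (k + 1) - δ k ≤ (α - 1) * δ k / (k + 1)) :
    (∀ k ≥ 1, 0 < δ k) ∧
      ∃ C > 0, ∀ k ≥ 1, f (x k) - f xstar ≤ C / δ k := by
  have hδpos : ∀ k ≥ 1, 0 < δ k := by
    intro k hk
    rw [hδ k]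
    have h1 := hG2 k hk
    have h2 : (0:ℝ) < (k:ℝ) + 1 := by positivity
    push_cast
    exact mul_pos (mul_pos hh h1) h2
  set v : ℕ → H := fun k =>
      (α - 1) • (x k - xstar) + (k:ℝ) • (x k - x (k - 1))
        + (h * k * β k) • gradient f (x k) with hvdef
  have hv : ∀ k : ℕ, 1 ≤ k →
      v (k+1) - v k = (-(δ k / ((k:ℝ)+1))) • gradient f (x (k+1)) := by
    intro k hk
    have h1 := hrec k hk
    have hK : ((k:ℝ)+1) ≠ 0 := by positivity
    have hcoef : -(δ k / ((k:ℝ)+1))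
        = -(b k * h^2 * k + h * k * β k - h * ((k:ℝ)+1) * β (k+1)) := by
      rw [hδ]
      push_cast
      field_simp
      ring
    rw [hcoef]
    simp only [hvdef, Nat.add_sub_cancel]
    push_cast
    linear_combination (norm := module) h1
  set E : ℕ → ℝ := fun k => δ k * (f (x k) - f xstar) + ‖v k‖^2 / 2 with hEdef
  have hE : ∀ k ≥ 1, E (k+1) ≤ E k := by
    intro k hk
    have hK0 : (0:ℝ) < (k:ℝ)+1 := by positivity
    have hδk := hδpos k hk
    have hdq : 0 ≤ δ k / ((k:ℝ)+1) := by positivity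
    set G := gradient f (x (k+1)) with hGdef
    have hv1 := hv k hk
    have hni : ‖v (k+1)‖^2/2 - ‖v k‖^2/2 ≤ ⟪v (k+1) - v k, v (k+1)⟫ := by
      have h2 : ‖v (k+1) - v k‖^2
          = ‖v (k+1)‖^2 - 2 * ⟪v (k+1), v k⟫ + ‖v k‖^2 := norm_sub_sq_real _ _
      have h3 : ⟪v (k+1) - v k, v (k+1)⟫ = ‖v (k+1)‖^2 - ⟪v (k+1), v k⟫ := by
        rw [inner_sub_left, real_inner_self_eq_norm_sq, real_inner_comm]
      nlinarith [sq_nonneg ‖v (k+1) - v k‖]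
    have hA : f (x (k+1)) - f xstar ≤ ⟪G, x (k+1) - xstar⟫ := by
      have := grad_convex_ineq f hconv hdiff (x (k+1)) xstar
      rw [show xstar - x (k+1) = -(x (k+1) - xstar) by abel, inner_neg_right] at this
      rw [hGdef]; linarith
    have hB : f (x (k+1)) - f (x k) ≤ ⟪G, x (k+1) - x k⟫ := by
      have := grad_convex_ineq f hconv hdiff (x (k+1)) (x k)
      rw [show x k - x (k+1) = -(x (k+1) - x k) by abel, inner_neg_right] at this
      rw [hGdef]; linarith
    have hCn : (0:ℝ) ≤ ⟪G, G⟫ := real_inner_self_nonneg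
    have hexp : ⟪G, v (k+1)⟫
        = (α-1) * ⟪G, x (k+1) - xstar⟫ + ((k:ℝ)+1) * ⟪G, x (k+1) - x k⟫
          + (h * ((k:ℝ)+1) * β (k+1)) * ⟪G, G⟫ := by
      simp only [hvdef, Nat.add_sub_cancel, inner_add_right, real_inner_smul_right, hGdef]
      push_cast
      ring
    have hα1 : 0 ≤ α - 1 := by linarith
    have hinner : (α-1) * (f (x (k+1)) - f xstar)
        + ((k:ℝ)+1) * (f (x (k+1)) - f (x k)) ≤ ⟪G, v (k+1)⟫ := by
      rw [hexp]
      have t1 := mul_le_mul_of_nonneg_left hA hα1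
      have t2 := mul_le_mul_of_nonneg_left hB hK0.le
      have t3 : 0 ≤ (h * ((k:ℝ)+1) * β (k+1)) * ⟪G, G⟫ :=
        mul_nonneg (mul_nonneg (mul_nonneg hh.le hK0.le) (hβnn (k+1))) hCn
      linarith
    have hiv : ⟪v (k+1) - v k, v (k+1)⟫ = -(δ k / ((k:ℝ)+1)) * ⟪G, v (k+1)⟫ := by
      rw [hv1, real_inner_smul_left, hGdef]
    have hG3k := hG3 k hk
    have hF1 : 0 ≤ f (x (k+1)) - f xstar := by linarith [hmin (x (k+1))]
    have hmul := mul_le_mul_of_nonneg_right hG3k hF1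
    have t := mul_le_mul_of_nonneg_left hinner hdq
    have heq : δ k / ((k:ℝ)+1) * ((α-1) * (f (x (k+1)) - f xstar)
          + ((k:ℝ)+1) * (f (x (k+1)) - f (x k)))
        = (α-1) * δ k / ((k:ℝ)+1) * (f (x (k+1)) - f xstar)
          + δ k * (f (x (k+1)) - f xstar) - δ k * (f (x k) - f xstar) := by
      field_simp
      ring
    rw [heq] at t
    simp only [hEdef]
    push_cast at hmul
    nlinarith [hni, hiv, t, hmul]
  have hmono : ∀ k, 1 ≤ k → E k ≤ E 1 := by
    intro k hk
    induction k, hk using Nat.le_induction with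
    | base => exact le_rfl
    | succ n hn ih => exact (hE n hn).trans ih
  have hE1 : 0 ≤ E 1 := by
    have h1 : 0 ≤ f (x 1) - f xstar := by linarith [hmin (x 1)]
    have h2 : 0 ≤ ‖v 1‖^2 / 2 := by positivity
    simp only [hEdef]
    have := (hδpos 1 le_rfl).le
    nlinarith
  refine ⟨hδpos, E 1 + 1, by linarith, ?_⟩
  intro k hk
  rw [le_div_iff₀ (hδpos k hk)]
  have hEk := hmono k hk
  have h2 : 0 ≤ ‖v k‖^2 / 2 := by positivity
  have h3 : δ k * (f (x k) - f xstar) ≤ E k := by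
    simp only [hEdef]; linarith
  nlinarith [h3, hEk]
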